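/- For every positive integer n, with p = 2^{⌊log₂ n⌋} and k = ⌊log₂ n⌋, it holds that S_q(n + p) = S_q(n) + (2q − 1)·S_q(p) − (n − p)·q^{k+1}·(1 − q) + q·p. -/

import Mathlib

open scoped BigOperators

/-- distance from `x` to the nearest integer -/
noncomputable def tau (x : ℝ) : ℝ := |x - round x|

/-- q-weighted binary digit sum: `s_q(n) = Σ ω_i q^(i+1)` -/
noncomputable def sdigq (q : ℝ) (n : ℕ) : ℝ :=
  ∑ i ∈ Finset.range n, if n.testBit i then q ^ (i + 1) else 0

/-- `S_q(n) = Σ_{k<n} s_q(k)` -/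
noncomputable def Sdigq (q : ℝ) (n : ℕ) : ℝ := ∑ k ∈ Finset.range n, sdigq q k

/-- Takagi–Landsberg function -/
noncomputable def Ta (a x : ℝ) : ℝ := ∑' n : ℕ, a ^ n * tau (2 ^ n * x)

lemma sdigq_eq (q : ℝ) (n B : ℕ) (hB : n ≤ B) :
    sdigq q n = ∑ i ∈ Finset.range B, if n.testBit i then q ^ (i + 1) else 0 := by
  unfold sdigq
  refine Finset.sum_subset (Finset.range_subset_range.2 hB) ?_
  intro i hi hni
  simp only [Finset.mem_range, not_lt] at hni
  rw [Nat.testBit_lt_two_pow (lt_of_lt_of_le (Nat.lt_two_pow_self (n := n)) (Nat.pow_le_pow_right (by norm_num) hni))]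
  simp

lemma sdigq_two_pow_add (q : ℝ) (k j : ℕ) (hj : j < 2 ^ k) :
    sdigq q (2 ^ k + j) = q ^ (k + 1) + sdigq q j := by
  have h1 : 2 ^ k + j ≤ 2 ^ k + j + (k + 1) := by omega
  have h2 : j ≤ 2 ^ k + j + (k + 1) := by omega
  rw [sdigq_eq q (2 ^ k + j) (2 ^ k + j + (k + 1)) h1, sdigq_eq q j (2 ^ k + j + (k + 1)) h2]
  have hjk : j.testBit k = false := Nat.testBit_lt_two_pow hj
  have hterm : ∀ i ∈ Finset.range (2 ^ k + j + (k + 1)),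
      (if (2 ^ k + j).testBit i then q ^ (i + 1) else 0)
        = (if i = k then q ^ (k + 1) else 0) + (if j.testBit i then q ^ (i + 1) else 0) := by
    intro i _
    rcases lt_trichotomy i k with h | rfl | h
    · rw [Nat.testBit_two_pow_add_gt h, if_neg h.ne]
      ring
    · rw [Nat.testBit_two_pow_add_eq, hjk]
      simp
    · have hb : (2 ^ k + j).testBit i = false := by
        apply Nat.testBit_lt_two_pow
        calc 2 ^ k + j < 2 ^ (k + 1) := by omega
          _ ≤ 2 ^ i := Nat.pow_le_pow_right (by norm_num) h
      rw [hb, Nat.testBit_lt_two_pow (lt_of_lt_of_le hj (Nat.pow_le_pow_right (by norm_num) h.le)),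
        if_neg h.ne']
      simp
  rw [Finset.sum_congr rfl hterm, Finset.sum_add_distrib, Finset.sum_ite_eq' _ k fun _ => q ^ (k+1)]
  rw [if_pos (by simp only [Finset.mem_range]; omega)]

lemma Sdigq_two_pow_add (q : ℝ) (k m : ℕ) (hm : m ≤ 2 ^ k) :
    Sdigq q (2 ^ k + m) = Sdigq q (2 ^ k) + Sdigq q m + m * q ^ (k + 1) := by
  unfold Sdigq
  rw [← Finset.sum_range_add_sum_Ico _ (Nat.le_add_right (2 ^ k) m),
    Finset.sum_Ico_eq_sum_range]
  simp only [Nat.add_sub_cancel_left]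
  have : ∀ i ∈ Finset.range m, sdigq q (2 ^ k + i) = q ^ (k + 1) + sdigq q i := by
    intro i hi
    exact sdigq_two_pow_add q k i (lt_of_lt_of_le (Finset.mem_range.1 hi) hm)
  rw [Finset.sum_congr rfl this, Finset.sum_add_distrib, Finset.sum_const, Finset.card_range]
  ring

lemma Sdigq_two_pow (q : ℝ) (k : ℕ) :
    2 * (1 - q) * Sdigq q (2 ^ k) = q * 2 ^ k * (1 - q ^ k) := by
  induction k with
  | zero => simp [Sdigq, sdigq]
  | succ k ih =>
    have h : Sdigq q (2 ^ (k + 1)) = Sdigq q (2 ^ k) + Sdigq q (2 ^ k) + 2 ^ k * q ^ (k + 1) := by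
      have := Sdigq_two_pow_add q k (2 ^ k) le_rfl
      rw [← two_mul, ← pow_succ'] at this
      push_cast at this ⊢
      linarith [this]
    rw [h]
    have : 2 * (1 - q) * (Sdigq q (2 ^ k) + Sdigq q (2 ^ k) + 2 ^ k * q ^ (k + 1))
        = 2 * (2 * (1 - q) * Sdigq q (2 ^ k)) + 2 * (1 - q) * (2 ^ k * q ^ (k + 1)) := by ring
    rw [this, ih]
    ring

theorem Sq_add_p (q : ℝ) (n : ℕ) (hn : 0 < n) :
    Sdigq q (n + 2 ^ Nat.log 2 n) =
      Sdigq q n + (2 * q - 1) * Sdigq q (2 ^ Nat.log 2 n)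
        - ((n : ℝ) - 2 ^ Nat.log 2 n) * q ^ (Nat.log 2 n + 1) * (1 - q)
        + q * 2 ^ Nat.log 2 n := by
  set k := Nat.log 2 n with hk
  have hpn : 2 ^ k ≤ n := Nat.pow_log_le_self 2 hn.ne'
  have hn2 : n < 2 ^ (k + 1) := Nat.lt_pow_succ_log_self (by norm_num) n
  set m := n - 2 ^ k with hmdef
  have hnm : n = 2 ^ k + m := by omega
  have hm : m ≤ 2 ^ k := by omega
  have hm2 : m ≤ 2 ^ (k + 1) := le_trans hm (by omega)
  have hL : n + 2 ^ k = 2 ^ (k + 1) + m := by rw [pow_succ]; omega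
  rw [hL, Sdigq_two_pow_add q (k + 1) m hm2, hnm, Sdigq_two_pow_add q k m hm]
  have hT : Sdigq q (2 ^ (k + 1)) = Sdigq q (2 ^ k) + Sdigq q (2 ^ k) + 2 ^ k * q ^ (k + 1) := by
    have := Sdigq_two_pow_add q k (2 ^ k) le_rfl
    rw [← two_mul, ← pow_succ'] at this
    push_cast at this ⊢
    linarith [this]
  rw [hT]
  have hkey := Sdigq_two_pow q k
  have hcast : ((2 ^ k + m : ℕ) : ℝ) - 2 ^ k = (m : ℝ) := by push_cast; ring
  rw [hcast]
  push_cast at hkey ⊢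
  linear_combination hkey
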